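/- Let $n$ be odd, $m \ge 2$, and consider the quadratic form $g(y) = v_0 y_1^2 + v_{(n-1)m} y_{N}^2 + v_{M}\big( y_{M/2+1}^2 + \sum_{i \ne j,\ i+j = M+2} y_i y_j \big)$ in $N = ((n-1)m+2)/2$ variables, where $M = (n-1)m/2$, with $v_0, v_M, v_{(n-1)m} \ge 0$. If $v_M > 0$ and $M \ge 4$, then $g$ takes a negative value; hence the associated Hankel matrix is not positive semi-definite. -/

import Mathlib

theorem stmt_16 (n m : ℕ) (hn : Odd n) (hm : 2 ≤ m)
    (v0 vM vnm : ℝ) (hv0 : 0 ≤ v0) (hvM : 0 < vM) (hvnm : 0 ≤ vnm)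
    (M N : ℕ) (hM : M = (n - 1) * m / 2) (hN : N = ((n - 1) * m + 2) / 2)
    (hM4 : 4 ≤ M) :
    ∃ y : ℕ → ℝ,
      v0 * (y 1) ^ 2 + vnm * (y N) ^ 2 +
        vM * ((y (M / 2 + 1)) ^ 2 +
          ∑ i ∈ Finset.Icc 1 N, ∑ j ∈ Finset.Icc 1 N,
            if i ≠ j ∧ i + j = M + 2 then y i * y j else 0) < 0 := by
  have hNM : N = M + 1 := by
    subst hM hN; omega
  set y : ℕ → ℝ := fun i => if i = 2 then 1 else if i = M then -1 else 0 with hy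
  refine ⟨y, ?_⟩
  have hy2 : y 2 = 1 := by simp [hy]
  have hyM : y M = -1 := by simp [hy]; omega
  have hyk : ∀ k, k ≠ 2 → k ≠ M → y k = 0 := by
    intro k h1 h2; simp [hy, h1, h2]
  have hsub : ({2, M} : Finset ℕ) ⊆ Finset.Icc 1 N := by
    intro k hk
    simp only [Finset.mem_insert, Finset.mem_singleton] at hk
    rcases hk with rfl | rfl <;> simp [Finset.mem_Icc] <;> omega
  have hsum : (∑ i ∈ Finset.Icc 1 N, ∑ j ∈ Finset.Icc 1 N,
      if i ≠ j ∧ i + j = M + 2 then y i * y j else 0) = -2 := by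
    rw [← Finset.sum_subset hsub]
    · rw [Finset.sum_pair (by omega : (2:ℕ) ≠ M)]
      have h2 : (∑ j ∈ Finset.Icc 1 N,
          if 2 ≠ j ∧ 2 + j = M + 2 then y 2 * y j else 0) = -1 := by
        rw [Finset.sum_eq_single M]
        · rw [if_pos ⟨by omega, by omega⟩, hy2, hyM]; ring
        · intro j _ hj
          rw [if_neg]; rintro ⟨-, h⟩; omega
        · intro h; exact absurd (hsub (by simp)) h
      have hMsum : (∑ j ∈ Finset.Icc 1 N,
          if M ≠ j ∧ M + j = M + 2 then y M * y j else 0) = -1 := by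
        rw [Finset.sum_eq_single 2]
        · rw [if_pos ⟨by omega, by omega⟩, hy2, hyM]; ring
        · intro j _ hj
          rw [if_neg]; rintro ⟨-, h⟩; omega
        · intro h; exact absurd (hsub (by simp)) h
      rw [h2, hMsum]; ring
    · intro i hi hi2
      simp only [Finset.mem_insert, Finset.mem_singleton, not_or] at hi2
      apply Finset.sum_eq_zero
      intro j _
      rw [hyk i hi2.1 hi2.2]
      split <;> ring
  rw [hsum, hyk 1 (by omega) (by omega), hyk N (by omega) (by omega),
      hyk (M / 2 + 1) (by omega) (by omega)]
  nlinarith
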